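/- Let I be the ideal of k[x,y,z,w] generated by y² − x³ and x⁴ + xz² − w³, over a field k of characteristic zero. Then ord_0(I) = 2, and for every point a ≠ 0 of affine 4-space, ord_a(I) ≤ 1. (I.e., the maximum order 2 of I is attained precisely at the origin.) -/
import Mathlib

open MvPolynomial

/-- The maximal ideal of the point `a ∈ kⁿ`: polynomials vanishing at `a`. -/
noncomputable def mIdeal {k : Type} [Field k] {n : ℕ} (a : Fin n → k) :
    Ideal (MvPolynomial (Fin n) k) :=
  RingHom.ker (eval a)

lemma mem_mIdeal {k : Type} [Field k] {n : ℕ} {a : Fin n → k} {f : MvPolynomial (Fin n) k} :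
    f ∈ mIdeal a ↔ eval a f = 0 := RingHom.mem_ker

lemma eval_pderiv_sq {k : Type} [Field k] {n : ℕ} {a : Fin n → k} {f : MvPolynomial (Fin n) k}
    (hf : f ∈ (mIdeal a) ^ 2) (i : Fin n) : eval a (pderiv i f) = 0 := by
  rw [pow_two] at hf
  refine Submodule.mul_induction_on hf ?_ ?_
  · intro g hg h hh
    simp [pderiv_mul, mem_mIdeal.mp hg, mem_mIdeal.mp hh]
  · intro x y hx hy
    simp [hx, hy]

lemma eval_pderiv2_cube {k : Type} [Field k] {n : ℕ} {a : Fin n → k} {f : MvPolynomial (Fin n) k}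
    (hf : f ∈ (mIdeal a) ^ 3) (i j : Fin n) : eval a (pderiv i (pderiv j f)) = 0 := by
  rw [pow_succ] at hf
  refine Submodule.mul_induction_on hf ?_ ?_
  · intro g hg h hh
    have hg1 : eval a g = 0 := mem_mIdeal.mp (Ideal.pow_le_self two_ne_zero hg)
    have hgi : eval a (pderiv i g) = 0 := eval_pderiv_sq hg i
    have hgj : eval a (pderiv j g) = 0 := eval_pderiv_sq hg j
    simp [pderiv_mul, hg1, hgi, hgj, mem_mIdeal.mp hh]
  · intro x y hx hy
    simp [hx, hy]

theorem example_ord_two_only_at_origin (k : Type) [Field k] [CharZero k] :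
    let I : Ideal (MvPolynomial (Fin 4) k) :=
      Ideal.span {X 1 ^ 2 - X 0 ^ 3, X 0 ^ 4 + X 0 * X 2 ^ 2 - X 3 ^ 3}
    (I ≤ (mIdeal (0 : Fin 4 → k)) ^ 2 ∧ ¬ I ≤ (mIdeal (0 : Fin 4 → k)) ^ 3) ∧
    ∀ a : Fin 4 → k, a ≠ 0 → ¬ I ≤ (mIdeal a) ^ 2 := by
  intro I
  have hX : ∀ i : Fin 4, X i ∈ mIdeal (0 : Fin 4 → k) := by
    intro i; rw [mem_mIdeal]; simp
  have hf1 : (X 1 ^ 2 - X 0 ^ 3 : MvPolynomial (Fin 4) k) ∈ I :=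
    Ideal.subset_span (by simp)
  have hf2 : (X 0 ^ 4 + X 0 * X 2 ^ 2 - X 3 ^ 3 : MvPolynomial (Fin 4) k) ∈ I :=
    Ideal.subset_span (by simp)
  refine ⟨⟨?_, ?_⟩, ?_⟩
  · -- I ≤ m₀²
    rw [Ideal.span_le]
    rintro f hf
    simp only [Set.mem_insert_iff, Set.mem_singleton_iff] at hf
    have h2 : ∀ i : Fin 4, (X i : MvPolynomial (Fin 4) k) ^ 2 ∈ (mIdeal (0 : Fin 4 → k)) ^ 2 :=
      fun i => Ideal.pow_mem_pow (hX i) 2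
    have h3 : ∀ i : Fin 4, (X i : MvPolynomial (Fin 4) k) ^ 3 ∈ (mIdeal (0 : Fin 4 → k)) ^ 2 := by
      intro i
      exact Ideal.pow_le_pow_right (by norm_num) (Ideal.pow_mem_pow (hX i) 3)
    have h4 : ∀ i : Fin 4, (X i : MvPolynomial (Fin 4) k) ^ 4 ∈ (mIdeal (0 : Fin 4 → k)) ^ 2 := by
      intro i
      exact Ideal.pow_le_pow_right (by norm_num) (Ideal.pow_mem_pow (hX i) 4)
    have hxz : (X 0 * X 2 ^ 2 : MvPolynomial (Fin 4) k) ∈ (mIdeal (0 : Fin 4 → k)) ^ 2 := by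
      rw [pow_two]
      exact Ideal.mul_mem_mul (hX 0) (Ideal.pow_mem_of_mem _ (hX 2) 2 (by norm_num))
    rcases hf with rfl | rfl
    · exact sub_mem (h2 1) (h3 0)
    · exact sub_mem (add_mem (h4 0) hxz) (h3 3)
  · -- ¬ I ≤ m₀³
    intro h
    have := eval_pderiv2_cube (h hf1) 1 1
    simp [pderiv_X, pderiv_pow, map_ofNat] at this
  · -- a ≠ 0
    intro a ha h
    have h1 := fun i => eval_pderiv_sq (h hf1) i
    have h2 := fun i => eval_pderiv_sq (h hf2) i
    have e10 := h1 0
    have e11 := h1 1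
    have e20 := h2 0
    have e23 := h2 3
    simp [pderiv_X, pderiv_pow] at e10 e11 e20 e23
    simp [e10] at e20
    exact ha (funext fun i => by fin_cases i <;> simp [e10, e11, e20, e23])
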